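/- The map ξ : ℂ* → ℂ² given by ξ(t) = ((t² + t + 2/3)·t⁴, (t² − t + 1/3)·t^{−8}) is injective. -/

import Mathlib

/-- The map `t ↦ ((t² + t + 2/3)·t⁴, (t² − t + 1/3)·t⁻⁸)` is injective on
`ℂ*` (the exceptional case (t) of the Main Theorem). -/
theorem case_t_injective :
    Set.InjOn
      (fun t : ℂ =>
        ((t ^ 2 + t + 2 / 3) * t ^ 4,
         (t ^ 2 - t + 1 / 3) * t ^ (-8 : ℤ)))
      {t : ℂ | t ≠ 0} := by
  intro x hx y hy h
  simp only [Set.mem_setOf_eq] at hx hy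
  simp only [Prod.mk.injEq] at h
  obtain ⟨h1, h2⟩ := h
  have e2 : (x ^ 2 - x + 1/3) * y ^ 8 = (y ^ 2 - y + 1/3) * x ^ 8 := by
    have hx8 : x ^ (-8:ℤ) = (x ^ 8)⁻¹ := by
      rw [zpow_neg]; exact congrArg _ (zpow_natCast _ 8)
    have hy8 : y ^ (-8:ℤ) = (y ^ 8)⁻¹ := by
      rw [zpow_neg]; exact congrArg _ (zpow_natCast _ 8)
    rw [hx8, hy8] at h2
    field_simp at h2
    linear_combination h2 / 3
  have key : x ^ 28 * (x - y) = 0 := by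
    linear_combination ((-4/9:ℂ)*x^16*y^6 + (4:ℂ)*x^17*y^6 + (-4/9:ℂ)*x^18*y^4 + (4/3:ℂ)*x^18*y^5 + (-43/3:ℂ)*x^18*y^6 + (8/3:ℂ)*x^19*y^4 + (-8:ℂ)*x^19*y^5 + (26:ℂ)*x^19*y^6 + (-4/9:ℂ)*x^20*y^2 + (2/3:ℂ)*x^20*y^3 + (-22/3:ℂ)*x^20*y^4 + (19:ℂ)*x^20*y^5 + (-24:ℂ)*x^20*y^6 + (10/3:ℂ)*x^21*y^2 + (-5:ℂ)*x^21*y^3 + (10:ℂ)*x^21*y^4 + (-21:ℂ)*x^21*y^5 + (9:ℂ)*x^21*y^6 + (-4/9:ℂ)*x^22 + (2:ℂ)*x^22*y^1 + (-34/3:ℂ)*x^22*y^2 + (14:ℂ)*x^22*y^3 + (-6:ℂ)*x^22*y^4 + (9:ℂ)*x^22*y^5 + (2:ℂ)*x^23 + (-9:ℂ)*x^23*y^1 + (21:ℂ)*x^23*y^2 + (-18:ℂ)*x^23*y^3 + (-4:ℂ)*x^24 + (15:ℂ)*x^24*y^1 + (-21:ℂ)*x^24*y^2 + (9:ℂ)*x^24*y^3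 + (3:ℂ)*x^25 + (-9:ℂ)*x^25*y^1 + (9:ℂ)*x^25*y^2) * h1 + ((-8/9:ℂ)*x^16*y^2 + (-4/3:ℂ)*x^16*y^3 + (-4/3:ℂ)*x^16*y^4 + (16/3:ℂ)*x^17*y^2 + (8:ℂ)*x^17*y^3 + (8:ℂ)*x^17*y^4 + (-8/9:ℂ)*x^18 + (4/3:ℂ)*x^18*y^1 + (-22/3:ℂ)*x^18*y^2 + (-11:ℂ)*x^18*y^3 + (-15:ℂ)*x^18*y^4 + (8/3:ℂ)*x^19 + (-4:ℂ)*x^19*y^1 + (-2:ℂ)*x^19*y^2 + (-3:ℂ)*x^19*y^3 + (9:ℂ)*x^19*y^4 + (-10/3:ℂ)*x^20 + (2:ℂ)*x^20*y^1 + (3:ℂ)*x^20*y^2 + (9:ℂ)*x^20*y^3 + (-3:ℂ)*x^21 + (-9:ℂ)*x^21*y^1 + (-3:ℂ)*x^22 + (9:ℂ)*x^22*y^1 + (9:ℂ)*x^23) * e2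
  have hx28 : x ^ 28 ≠ 0 := pow_ne_zero _ hx
  have := mul_eq_zero.mp key
  rcases this with h' | h'
  · exact absurd h' hx28
  · exact sub_eq_zero.mp h'
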